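/- Suppose ā > b̄. Then there is exactly one x with 0 < x ≤ 1 such that ξ(x) = 1, and this x satisfies x < 1. (This is the second case of Lemma A.1: when the mutant's mean fitness exceeds the resident's, the fixed-point equation 1 − γ̄* = (1 − γ̄*)·Σᵢ pᵢ aᵢ/(b̄ + aᵢ(1 − γ̄*)) has exactly two solutions in [0,1], namely γ̄* = 1 and exactly one γ̄* ∈ (0,1).) -/

import Mathlib

/-- Lemma A.1, second case: if the mutant's mean fitness `abar` exceeds the
resident's `bbar`, then there is exactly one `x` with `0 < x ≤ 1` such that
`ξ x = 1`, and this `x` satisfies `x < 1`. -/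
theorem stmt_1 (m : ℕ) (hm : 1 ≤ m) (p a : Fin m → ℝ)
    (hp : ∀ i, 0 < p i ∧ p i < 1) (hpsum : ∑ i, p i = 1)
    (ha : ∀ i, 0 < a i) (bbar : ℝ) (hbbar : 0 < bbar)
    (abar : ℝ) (habar : abar = ∑ i, p i * a i)
    (ξ : ℝ → ℝ) (hξ : ∀ x, ξ x = ∑ i, p i * (a i / (bbar + a i * x)))
    (hab : bbar < abar) :
    (∃! x : ℝ, 0 < x ∧ x ≤ 1 ∧ ξ x = 1) ∧
    (∀ x : ℝ, 0 < x → x ≤ 1 → ξ x = 1 → x < 1) := by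
  have hne : (Finset.univ : Finset (Fin m)).Nonempty := by
    have : 0 < m := hm
    exact ⟨⟨0, this⟩, Finset.mem_univ _⟩
  have hden : ∀ (i : Fin m) (x : ℝ), 0 ≤ x → 0 < bbar + a i * x := by
    intro i x hx
    have := mul_nonneg (ha i).le hx
    linarith
  -- strict antitonicity on [0,∞)
  have hanti : ∀ x y : ℝ, 0 ≤ x → x < y → ξ y < ξ x := by
    intro x y hx hxy
    rw [hξ, hξ]
    apply Finset.sum_lt_sum_of_nonempty hne
    intro i _
    apply mul_lt_mul_of_pos_left _ (hp i).1
    apply div_lt_div_of_pos_left (ha i) (hden i x hx)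
    have := mul_lt_mul_of_pos_left hxy (ha i)
    linarith
  -- ξ 0 > 1
  have hξ0 : 1 < ξ 0 := by
    rw [hξ]
    have : ∑ i, p i * (a i / (bbar + a i * 0)) = abar / bbar := by
      rw [habar, Finset.sum_div]
      apply Finset.sum_congr rfl
      intro i _
      field_simp
      rw [mul_zero, add_zero, mul_div_assoc, div_self hbbar.ne', mul_one]
    rw [this]
    rw [lt_div_iff₀ hbbar]
    linarith
  -- ξ 1 < 1
  have hξ1 : ξ 1 < 1 := by
    rw [hξ]
    calc ∑ i, p i * (a i / (bbar + a i * 1)) < ∑ i, p i * 1 := by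
          apply Finset.sum_lt_sum_of_nonempty hne
          intro i _
          apply mul_lt_mul_of_pos_left _ (hp i).1
          rw [div_lt_one (hden i 1 zero_le_one)]
          linarith [ha i]
      _ = 1 := by simp [hpsum]
  -- continuity on [0,1]
  have hcont : ContinuousOn ξ (Set.Icc 0 1) := by
    have : ContinuousOn (fun x : ℝ => ∑ i, p i * (a i / (bbar + a i * x)))
        (Set.Icc 0 1) := by
      apply continuousOn_finset_sum
      intro i _
      apply ContinuousOn.mul continuousOn_const
      apply ContinuousOn.div continuousOn_const
      · fun_prop
      · intro x hx
        exact (hden i x hx.1).ne'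
    exact this.congr (fun x _ => hξ x)
  -- existence via IVT
  obtain ⟨x, hxmem, hxeq⟩ : ∃ x ∈ Set.Icc (0:ℝ) 1, ξ x = 1 := by
    have := intermediate_value_Icc' (by norm_num : (0:ℝ) ≤ 1) hcont
    have h1 : (1:ℝ) ∈ Set.Icc (ξ 1) (ξ 0) := ⟨hξ1.le, hξ0.le⟩
    exact this h1
  have hx0 : 0 < x := by
    rcases lt_or_eq_of_le hxmem.1 with h | h
    · exact h
    · exfalso; rw [← h] at hxeq; linarith
  have hx1 : x < 1 := by
    rcases lt_or_eq_of_le hxmem.2 with h | h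
    · exact h
    · exfalso; rw [h] at hxeq; rw [hxeq] at hξ1; linarith
  have huniq : ∀ y : ℝ, 0 < y → y ≤ 1 → ξ y = 1 → y = x := by
    intro y hy0 hy1 hyeq
    by_contra hne'
    rcases lt_or_gt_of_ne hne' with h | h
    · have := hanti y x hy0.le h; rw [hyeq, hxeq] at this; linarith
    · have := hanti x y hx0.le h; rw [hyeq, hxeq] at this; linarith
  refine ⟨⟨x, ⟨hx0, hx1.le, hxeq⟩, fun y hy => huniq y hy.1 hy.2.1 hy.2.2⟩, ?_⟩
  intro y hy0 hy1 hyeq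
  rw [huniq y hy0 hy1 hyeq]
  exact hx1
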